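/- Let n ≥ 2, m ≥ 1, let a : Fin n → ℝ with a i > 0 for all i, let σ : Fin m → Fin n be injective, and let x : Fin n → ℝ with x i > 0 for all i. Suppose t, u, u' ∈ ℝ satisfy: ∑ i, x i * exp(a i * t) = 1 (closure of x), ∑ j, x (σ j) * exp(a (σ j) * u) = 1 (closure of the sub-part of x), and ∑ j, (x (σ j) * exp(a (σ j) * t)) * exp(a (σ j) * u') = 1 (closure of the sub-part of the closure of x). Then u = t + u', and consequently x (σ j) * exp(a (σ j) * u) = (x (σ j) * exp(a (σ j) * t)) * exp(a (σ j) * u') for all j; i.e. the subcomposition of x coincides with the subcomposition of the closure of x. -/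
import Mathlib

open Real Finset

/-- well-definedness of subcomposition on equivalence classes:
the closure parameter of the sub-part of `x` is the sum of the closure
parameter of `x` and that of the sub-part of the closure of `x`, so that the
subcomposition of `x` coincides with the subcomposition of the closure of `x`. -/
theorem stmt13 (n m : ℕ) (hn : 2 ≤ n) (hm : 1 ≤ m)
    (a : Fin n → ℝ) (ha : ∀ i, 0 < a i)
    (σ : Fin m → Fin n) (hσ : Function.Injective σ)
    (x : Fin n → ℝ) (hx : ∀ i, 0 < x i)
    (t u u' : ℝ)
    (ht : (∑ i, x i * Real.exp (a i * t)) = 1)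
    (hu : (∑ j, x (σ j) * Real.exp (a (σ j) * u)) = 1)
    (hu' : (∑ j, (x (σ j) * Real.exp (a (σ j) * t)) * Real.exp (a (σ j) * u')) = 1) :
    u = t + u' ∧
    ∀ j, x (σ j) * Real.exp (a (σ j) * u)
        = (x (σ j) * Real.exp (a (σ j) * t)) * Real.exp (a (σ j) * u') := by
  have hm' : Nonempty (Fin m) := ⟨⟨0, hm⟩⟩
  have hmono : StrictMono (fun s => ∑ j, x (σ j) * Real.exp (a (σ j) * s)) := by
    intro s1 s2 h
    apply Finset.sum_lt_sum_of_nonempty (Finset.univ_nonempty)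
    intro j _
    exact mul_lt_mul_of_pos_left (Real.exp_lt_exp.2
      (by exact (mul_lt_mul_iff_right₀ (ha _)).2 h)) (hx _)
  have key : u = t + u' := by
    apply hmono.injective
    show (∑ j, x (σ j) * Real.exp (a (σ j) * u))
        = ∑ j, x (σ j) * Real.exp (a (σ j) * (t + u'))
    rw [hu, ← hu']
    apply Finset.sum_congr rfl
    intro j _
    rw [mul_assoc, ← Real.exp_add, mul_add]
  refine ⟨key, fun j => ?_⟩
  rw [key, mul_assoc, ← Real.exp_add, mul_add]
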